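/- Let R be a Noetherian ring and M an Artinian R-module. Then Supp_R(M) ⊆ Cos_R(M), where Cos_R(M) = {p ∈ Spec R | Hom_R(R_p, M) ≠ 0} is the co-support of M. -/

import Mathlib

/-- The co-support of `M`: the set of primes `p` with `Hom_R(R_p, M) ≠ 0`. -/
def coSupport (R : Type*) [CommRing R] (M : Type*) [AddCommGroup M] [Module R M] :
    Set (PrimeSpectrum R) :=
  {p | Nontrivial (Localization.AtPrime p.asIdeal →ₗ[R] M)}

/-- Let `R` be a Noetherian ring and `M` an Artinian `R`-module. Then
`Supp_R(M) ⊆ Cos_R(M)`. -/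
theorem support_subset_coSupport
    (R M : Type*) [CommRing R] [IsNoetherianRing R]
    [AddCommGroup M] [Module R M] [IsArtinian R M] :
    Module.support R M ⊆ coSupport R M := by
  intro p hp
  classical
  haveI hprime := p.2
  have hone : (1 : R) ∉ p.asIdeal := fun h =>
    hprime.ne_top (Ideal.eq_top_of_isUnit_mem _ h isUnit_one)
  -- the torsion submodule w.r.t. the complement of `p`
  set K : Submodule R M :=
    { carrier := {x | ∃ s ∉ p.asIdeal, s • x = 0}
      add_mem' := by
        rintro x y ⟨s, hs, hsx⟩ ⟨t, ht, hty⟩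
        refine ⟨s * t, fun h => ((Ideal.IsPrime.mem_or_mem hprime h).elim hs ht), ?_⟩
        have h1 : (s * t) • x = 0 := by rw [mul_comm, mul_smul, hsx, smul_zero]
        have h2 : (s * t) • y = 0 := by rw [mul_smul, hty, smul_zero]
        rw [smul_add, h1, h2, add_zero]
      zero_mem' := ⟨1, hone, smul_zero 1⟩
      smul_mem' := by
        rintro r x ⟨s, hs, hsx⟩
        exact ⟨s, hs, by rw [smul_comm, hsx, smul_zero]⟩ } with hKdef
  -- existence of an element not in K
  obtain ⟨m, hm⟩ := (Module.mem_support_iff').mp hp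
  have hKne : ¬ (⊤ : Submodule R M) ≤ K := by
    intro h
    obtain ⟨s, hs, hsm⟩ := h (Submodule.mem_top (x := m))
    exact hm s hs hsm
  -- minimal submodule not contained in K
  obtain ⟨N₀, hN₀, hmin⟩ :=
    IsArtinian.set_has_minimal {N : Submodule R M | ¬ N ≤ K} ⟨⊤, hKne⟩
  obtain ⟨z', hz'N, hz'K⟩ : ∃ x ∈ N₀, x ∉ K := by
    by_contra h
    push_neg at h
    exact hN₀ h
  have hspan : Submodule.span R {z'} = N₀ := by
    have h1 : Submodule.span R {z'} ≤ N₀ := by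
      rw [Submodule.span_le, Set.singleton_subset_iff]; exact hz'N
    have h2 : ¬ Submodule.span R {z'} ≤ K := fun h =>
      hz'K (h (Submodule.mem_span_singleton_self z'))
    rcases eq_or_lt_of_le h1 with h | h
    · exact h
    · exact absurd h (hmin _ h2)
  -- p • N₀ ≤ K by Nakayama and minimality
  have hpN₀ : p.asIdeal • N₀ ≤ K := by
    by_contra h
    have hle : p.asIdeal • N₀ ≤ N₀ := Submodule.smul_le_right
    have heq : p.asIdeal • N₀ = N₀ := by
      rcases eq_or_lt_of_le hle with h' | h'
      · exact h'
      · exact absurd h' (hmin _ h)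
    have hfg : N₀.FG := by
      rw [← hspan]; exact Submodule.fg_span_singleton z'
    obtain ⟨r, hr1, hr0⟩ :=
      Submodule.exists_sub_one_mem_and_smul_eq_zero_of_fg_of_le_smul p.asIdeal N₀ hfg heq.ge
    have hrp : r ∉ p.asIdeal := by
      intro hrP
      have h1 : (1 : R) ∈ p.asIdeal := by
        have := p.asIdeal.sub_mem hrP hr1
        simpa using this
      exact hone h1
    exact hN₀ (fun x hx => ⟨r, hrp, hr0 x hx⟩)
  -- a finite generating set of p
  obtain ⟨T, hT⟩ := (isNoetherian_def.mp ‹IsNoetherianRing R› p.asIdeal :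
    Submodule.FG p.asIdeal)
  -- for each generator a, pick s_a ∉ p killing a • z'
  have hgen : ∀ a : T, ∃ s ∉ p.asIdeal, s • (a : R) • z' = 0 := by
    rintro ⟨a, ha⟩
    have haP : a ∈ p.asIdeal := by
      rw [← hT]; exact Submodule.subset_span ha
    exact hpN₀ (Submodule.smul_mem_smul haP hz'N)
  choose s hs1 hs2 using hgen
  set S : R := ∏ a : T, s a with hSdef
  have hSp : S ∉ p.asIdeal := by
    intro h
    obtain ⟨a, -, ha⟩ := Ideal.IsPrime.prod_mem_iff.mp h
    exact hs1 a ha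
  set z : M := S • z' with hzdef
  have hzK : z ∉ K := by
    rintro ⟨t, ht, htz⟩
    refine hz'K ⟨t * S, fun h => ((Ideal.IsPrime.mem_or_mem hprime h).elim ht hSp), ?_⟩
    rw [mul_smul]; exact htz
  have hz0 : z ≠ 0 := fun h => hzK (h ▸ K.zero_mem)
  -- p ≤ Ann z
  have hpz : p.asIdeal ≤ LinearMap.ker (LinearMap.toSpanSingleton R M z) := by
    rw [← hT, Submodule.span_le]
    intro a ha
    simp only [SetLike.mem_coe, LinearMap.mem_ker, LinearMap.toSpanSingleton_apply]
    have h0 : s ⟨a, ha⟩ • a • z' = 0 := hs2 ⟨a, ha⟩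
    have hsplit : S = s ⟨a, ha⟩ * ∏ b ∈ Finset.univ.erase ⟨a, ha⟩, s b :=
      (Finset.mul_prod_erase Finset.univ s (Finset.mem_univ _)).symm
    rw [hzdef, smul_comm a S z', hsplit, mul_comm, mul_smul, h0, smul_zero]
  -- Ann z ≤ p
  have hzp : LinearMap.ker (LinearMap.toSpanSingleton R M z) ≤ p.asIdeal := by
    intro r hr
    by_contra hrp
    exact hzK ⟨r, hrp, hr⟩
  -- the embedding R/p → M
  set ℓ : (R ⧸ p.asIdeal) →ₗ[R] M :=
    Submodule.liftQ p.asIdeal (LinearMap.toSpanSingleton R M z) hpz with hldef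
  have hinj : Function.Injective ℓ := by
    rw [← LinearMap.ker_eq_bot, hldef, Submodule.ker_liftQ_eq_bot _ _ _ hzp]
  haveI hart : IsArtinian R (R ⧸ p.asIdeal) := isArtinian_of_injective ℓ hinj
  haveI : IsArtinianRing (R ⧸ p.asIdeal) := isArtinian_of_tower R hart
  haveI : IsDomain (R ⧸ p.asIdeal) := Ideal.Quotient.isDomain p.asIdeal
  have hF : IsField (R ⧸ p.asIdeal) := by
    by_contra h
    haveI : (⊥ : Ideal (R ⧸ p.asIdeal)).IsPrime := Ideal.bot_prime
    exact Ring.ne_bot_of_isMaximal_of_not_isField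
      (IsArtinianRing.isMaximal_of_isPrime (⊥ : Ideal (R ⧸ p.asIdeal))) h rfl
  -- the algebra map R_p → R/p
  have hunit : ∀ y : p.asIdeal.primeCompl,
      IsUnit ((Algebra.ofId R (R ⧸ p.asIdeal)) y) := by
    rintro ⟨y, hy⟩
    have hne : (Ideal.Quotient.mk p.asIdeal) y ≠ 0 := by
      rw [Ne, Ideal.Quotient.eq_zero_iff_mem]
      exact hy
    obtain ⟨b, hb⟩ := hF.mul_inv_cancel hne
    exact IsUnit.of_mul_eq_one (a := (Ideal.Quotient.mk p.asIdeal) y) b hb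
  set g : Localization.AtPrime p.asIdeal →ₐ[R] (R ⧸ p.asIdeal) :=
    IsLocalization.liftAlgHom (M := p.asIdeal.primeCompl) hunit with hgdef
  set F : Localization.AtPrime p.asIdeal →ₗ[R] M := ℓ.comp g.toLinearMap with hFdef
  have hF1 : F 1 = z := by
    have h1 : g 1 = 1 := map_one g
    have h2 : (1 : R ⧸ p.asIdeal) = Submodule.Quotient.mk (1 : R) := rfl
    rw [hFdef, LinearMap.comp_apply, AlgHom.toLinearMap_apply, h1, h2, hldef,
      Submodule.liftQ_apply, LinearMap.toSpanSingleton_apply, one_smul]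
  exact ⟨F, 0, fun h => hz0 (by rw [← hF1, h]; rfl)⟩
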